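/- arXiv:1112.0230 — 5 statements merged into one kernel-verified Lean document; each statement's English description precedes it below -/
import Mathlib

section
/- Let k be a field of characteristic p and let ρ: k → GL₂(k) send c to the unipotent matrix [[1,c],[0,1]]. For finite subgroups W, W' of the additive group (k,+), the subgroups ρ(W) and ρ(W') of GL₂(k) are conjugate in GL₂(k) if and only if W' = αW for some α ∈ k*. -/
open Matrix

/-- The unipotent representation `ρ : (k,+) → GL₂(k)`. -/
noncomputable def rho {k : Type*} [Field k] (c : k) : Matrix (Fin 2) (Fin 2) k :=
  !![1, c; 0, 1]

lemma rho_inj {k : Type*} [Field k] : Function.Injective (rho (k := k)) := by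
  intro a b h
  have := congrFun (congrFun h 0) 1
  simpa [rho] using this

lemma rho_zero {k : Type*} [Field k] : rho (0 : k) = 1 := by
  rw [rho, Matrix.one_fin_two]

lemma conj_rel {k : Type*} [Field k] {A B : Matrix (Fin 2) (Fin 2) k}
    (hBA : B * A = 1) {c c' : k} (h : A * rho c * B = rho c') :
    A 1 0 * c = 0 ∧ A 0 0 * c = c' * A 1 1 := by
  have h' : A * rho c = rho c' * A := by
    have := congrArg (· * A) h
    simpa [Matrix.mul_assoc, hBA] using this
  constructor
  · have := congrFun (congrFun h' 1) 1
    simp [rho, Matrix.mul_apply, Fin.sum_univ_two] at this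
    exact mul_eq_zero.mpr this
  · have := congrFun (congrFun h' 0) 1
    simp [rho, Matrix.mul_apply, Fin.sum_univ_two] at this
    linear_combination this

/-- Two subgroups of `GL₂(k)` of the form `ρ(W)` and `ρ(W')` are conjugate if and only if
`W' = αW` for some `α ∈ k*`. -/
theorem rho_subgroups_conjugate_iff {p : ℕ} [Fact p.Prime] (k : Type*) [Field k] [CharP k p]
    (W W' : AddSubgroup k) (hW : (W : Set k).Finite) (hW' : (W' : Set k).Finite) :
    (∃ M : GL (Fin 2) k,
        (fun A => (M : Matrix (Fin 2) (Fin 2) k) * A * (M⁻¹ : GL (Fin 2) k)) ''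
          (rho '' (W : Set k)) = rho '' (W' : Set k)) ↔
      ∃ α : kˣ, (fun c => (α : k) * c) '' (W : Set k) = (W' : Set k) := by
  constructor
  · rintro ⟨M, hM⟩
    set A : Matrix (Fin 2) (Fin 2) k := (M : Matrix (Fin 2) (Fin 2) k) with hA
    set B : Matrix (Fin 2) (Fin 2) k := ((M⁻¹ : GL (Fin 2) k) : Matrix (Fin 2) (Fin 2) k)
      with hB
    have hBA : B * A = 1 := M.inv_mul
    have hAB : A * B = 1 := M.mul_inv
    have fwd : ∀ c ∈ (W : Set k), ∃ c' ∈ (W' : Set k), A * rho c * B = rho c' := by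
      intro c hc
      have hmem : A * rho c * B ∈ rho '' (W' : Set k) := by
        rw [← hM]
        exact ⟨rho c, ⟨c, hc, rfl⟩, rfl⟩
      obtain ⟨c', hc', h⟩ := hmem
      exact ⟨c', hc', h.symm⟩
    have bwd : ∀ c' ∈ (W' : Set k), ∃ c ∈ (W : Set k), A * rho c * B = rho c' := by
      intro c' hc'
      have hmem : rho c' ∈ (fun X => A * X * B) '' (rho '' (W : Set k)) := by
        rw [hM]
        exact ⟨c', hc', rfl⟩
      obtain ⟨X, ⟨c, hc, rfl⟩, h⟩ := hmem
      exact ⟨c, hc, h⟩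
    by_cases hW0 : ∀ c ∈ (W : Set k), c = (0 : k)
    · refine ⟨1, ?_⟩
      have hW'0 : ∀ c' ∈ (W' : Set k), c' = (0 : k) := by
        intro c' hc'
        obtain ⟨c, hc, h⟩ := bwd c' hc'
        have hc0 := hW0 c hc
        subst hc0
        have : rho (0 : k) = rho c' := by
          rw [← h, rho_zero, mul_one, hAB]
        exact (rho_inj this).symm
      ext x
      simp only [Set.mem_image, one_mul, Units.val_one]
      constructor
      · rintro ⟨c, hc, rfl⟩
        have hc0 := hW0 c hc
        simp only [one_mul, hc0]
        exact W'.zero_mem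
      · intro hx
        have := hW'0 x hx
        exact ⟨0, W.zero_mem, by simp [this]⟩
    · push_neg at hW0
      obtain ⟨c₀, hc₀, hc₀ne⟩ := hW0
      obtain ⟨c₀', hc₀', h₀⟩ := fwd c₀ hc₀
      have hd : A 1 0 = 0 := by
        have := (conj_rel hBA h₀).1
        exact (mul_eq_zero.mp this).resolve_right hc₀ne
      have hdet : IsUnit A.det := (Matrix.isUnit_iff_isUnit_det A).mp M.isUnit
      have hdet' : A.det = A 0 0 * A 1 1 := by
        rw [Matrix.det_fin_two, hd]
        ring
      have hne : A 0 0 * A 1 1 ≠ 0 := hdet' ▸ hdet.ne_zero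
      have ha : A 0 0 ≠ 0 := fun h => hne (by rw [h, zero_mul])
      have he : A 1 1 ≠ 0 := fun h => hne (by rw [h, mul_zero])
      refine ⟨Units.mk0 (A 0 0 * (A 1 1)⁻¹) (by
        exact mul_ne_zero ha (inv_ne_zero he)), ?_⟩
      have key : ∀ c c' : k, A 0 0 * c = c' * A 1 1 → A 0 0 * (A 1 1)⁻¹ * c = c' := by
        intro c c' h
        field_simp
        linear_combination h
      ext x
      simp only [Set.mem_image, Units.val_mk0]
      constructor
      · rintro ⟨c, hc, rfl⟩
        obtain ⟨c', hc', h⟩ := fwd c hc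
        have := key c c' (conj_rel hBA h).2
        rw [this]
        exact hc'
      · intro hx
        obtain ⟨c, hc, h⟩ := bwd x hx
        exact ⟨c, hc, key c x (conj_rel hBA h).2⟩
  · rintro ⟨α, hα⟩
    have hmul : (!![(α : k), 0; 0, 1] : Matrix (Fin 2) (Fin 2) k) *
        !![((α⁻¹ : kˣ) : k), 0; 0, 1] = 1 := by
      rw [Matrix.mul_fin_two, Matrix.one_fin_two]
      simp
    have hmul' : (!![((α⁻¹ : kˣ) : k), 0; 0, 1] : Matrix (Fin 2) (Fin 2) k) *
        !![(α : k), 0; 0, 1] = 1 := by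
      rw [Matrix.mul_fin_two, Matrix.one_fin_two]
      simp
    refine ⟨⟨!![(α : k), 0; 0, 1], !![((α⁻¹ : kˣ) : k), 0; 0, 1], hmul, hmul'⟩, ?_⟩
    have hconj : ∀ c : k, (!![(α : k), 0; 0, 1] : Matrix (Fin 2) (Fin 2) k) * rho c *
        !![((α⁻¹ : kˣ) : k), 0; 0, 1] = rho ((α : k) * c) := by
      intro c
      rw [rho, rho, Matrix.mul_fin_two, Matrix.mul_fin_two]
      congr 1 <;> simp
    rw [← hα, Set.image_image, Set.image_image]
    refine Set.image_congr fun c _ => ?_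
    exact hconj c
end

section
/- Let k be a field of characteristic p and W a finite subgroup of (k,+) acting on k[x,y] by the rule (x,y)·c = (x, y+cx). Then the ring of invariants k[x,y]^W equals the polynomial subalgebra k[x, N_W(y)], where N_W(y) = ∏_{c∈W}(y+cx). -/
open MvPolynomial

/-- The algebra endomorphism of `k[x,y]` determined by `x ↦ x`, `y ↦ y + c·x`. -/
noncomputable def sigma2 {k : Type*} [CommRing k] (c : k) :
    MvPolynomial (Fin 2) k →ₐ[k] MvPolynomial (Fin 2) k :=
  aeval ![X 0, X 1 + C c * X 0]

namespace InvariantsAux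

variable {k : Type*} [Field k]

/-- `c·x` as an element of `k[x]`. -/
noncomputable def av (c : k) : Polynomial k := Polynomial.C c * Polynomial.X

lemma av_add (c d : k) : av (c + d) = av c + av d := by
  simp [av, add_mul]

lemma av_injective : Function.Injective (av (k := k)) := by
  intro c d h
  have := congrArg (fun p => Polynomial.coeff p 1) h
  simpa [av] using this

variable (W : AddSubgroup k) [Fintype W]

/-- The norm polynomial `N_W = ∏_{c ∈ W} (X + c·x)` in `(k[x])[X]`. -/
noncomputable def NW : Polynomial (Polynomial k) :=
  ∏ c : W, (Polynomial.X + Polynomial.C (av (c : k)))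

lemma NW_monic : (NW W).Monic :=
  Polynomial.monic_prod_of_monic _ _ fun c _ => Polynomial.monic_X_add_C _

lemma NW_natDegree : (NW W).natDegree = Fintype.card W := by
  rw [NW, Polynomial.natDegree_prod _ _ fun c _ => (Polynomial.monic_X_add_C _).ne_zero]
  simp [Polynomial.natDegree_X_add_C]

lemma NW_aeval (c : W) :
    Polynomial.aeval (Polynomial.X + Polynomial.C (av (c : k))) (NW W) = NW W := by
  rw [NW, map_prod]
  have key : ∀ d : W,
      Polynomial.aeval (Polynomial.X + Polynomial.C (av (c : k)))
        (Polynomial.X + Polynomial.C (av (d : k)))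
      = Polynomial.X + Polynomial.C (av ((d + c : W) : k)) := by
    intro d
    simp [map_add, Polynomial.aeval_X, Polynomial.aeval_C,
      Polynomial.algebraMap_eq, AddSubgroup.coe_add, av_add]
    ring
  calc ∏ d : W, Polynomial.aeval (Polynomial.X + Polynomial.C (av (c : k)))
        (Polynomial.X + Polynomial.C (av (d : k)))
      = ∏ d : W, (Polynomial.X + Polynomial.C (av (((Equiv.addRight c) d : W) : k))) := by
        refine Finset.prod_congr rfl fun d _ => ?_
        rw [key d]; rfl
    _ = ∏ d : W, (Polynomial.X + Polynomial.C (av ((d : W) : k))) :=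
        (Fintype.prod_equiv (Equiv.addRight c)
          (fun d : W => Polynomial.X + Polynomial.C (av (((Equiv.addRight c) d : W) : k)))
          (fun d : W => Polynomial.X + Polynomial.C (av ((d : W) : k)))
          (fun d => rfl))

lemma eq_C_of_invariant (F : Polynomial (Polynomial k))
    (hd : F.natDegree < Fintype.card W)
    (h : ∀ c : W, Polynomial.aeval (Polynomial.X + Polynomial.C (av (c : k))) F = F) :
    ∃ a, F = Polynomial.C a := by
  classical
  set g := F - Polynomial.C (F.eval 0) with hg_def
  by_cases hg : g = 0
  · exact ⟨F.eval 0, by rw [← sub_eq_zero]; exact hg⟩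
  exfalso
  have hroot : ∀ c : W, g.eval (av (c : k)) = 0 := by
    intro c
    have h1 : F.eval (av (c : k)) = F.eval 0 := by
      conv_rhs => rw [← h c]
      rw [← Polynomial.comp_eq_aeval, Polynomial.eval_comp]
      simp
    simp [hg_def, h1]
  have hinj : Function.Injective (fun c : W => av (c : k)) :=
    av_injective.comp Subtype.coe_injective
  have hsub : (Finset.univ.image fun c : W => av (c : k)) ⊆ g.roots.toFinset := by
    intro x hx
    rw [Finset.mem_image] at hx
    obtain ⟨c, _, rfl⟩ := hx
    rw [Multiset.mem_toFinset, Polynomial.mem_roots']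
    exact ⟨hg, hroot c⟩
  have h1 : Fintype.card W ≤ g.roots.toFinset.card := by
    calc Fintype.card W = (Finset.univ.image fun c : W => av (c : k)).card := by
          rw [Finset.card_image_of_injective _ hinj, Finset.card_univ]
      _ ≤ g.roots.toFinset.card := Finset.card_le_card hsub
  have h2 : g.roots.toFinset.card ≤ g.natDegree :=
    (Multiset.toFinset_card_le _).trans (Polynomial.card_roots' g)
  have h3 : g.natDegree ≤ F.natDegree := by
    refine (Polynomial.natDegree_sub_le _ _).trans ?_
    simp [Polynomial.natDegree_C]
  omega

lemma mem_adjoin_of_invariant (F : Polynomial (Polynomial k))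
    (h : ∀ c : W, Polynomial.aeval (Polynomial.X + Polynomial.C (av (c : k))) F = F) :
    F ∈ Algebra.adjoin (Polynomial k) {NW W} := by
  generalize hn : F.natDegree = n
  induction n using Nat.strong_induction_on generalizing F with
  | _ n ih =>
  by_cases hd : F.natDegree < Fintype.card W
  · obtain ⟨a, rfl⟩ := eq_C_of_invariant W F hd h
    rw [← Polynomial.algebraMap_eq]
    exact Subalgebra.algebraMap_mem _ a
  · push_neg at hd
    have hcard : 0 < Fintype.card W := Fintype.card_pos
    have hmo := NW_monic W
    have hNWdeg : (NW W).natDegree = Fintype.card W := NW_natDegree W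
    have hNW1 : NW W ≠ 1 := by
      intro h1
      rw [h1, Polynomial.natDegree_one] at hNWdeg
      omega
    set Q := F /ₘ NW W with hQdef
    set R := F %ₘ NW W with hRdef
    have hFeq : R + NW W * Q = F := Polynomial.modByMonic_add_div F (NW W)
    have hRdeg : R.natDegree < Fintype.card W := by
      rw [← hNWdeg]
      exact Polynomial.natDegree_modByMonic_lt F hmo hNW1
    have hinv : ∀ c : W,
        Polynomial.aeval (Polynomial.X + Polynomial.C (av (c : k))) Q = Q ∧
        Polynomial.aeval (Polynomial.X + Polynomial.C (av (c : k))) R = R := by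
      intro c
      set s : Polynomial (Polynomial k) := Polynomial.X + Polynomial.C (av (c : k)) with hs
      have hsdeg : s.natDegree = 1 := Polynomial.natDegree_X_add_C _
      have heq : Polynomial.aeval s R + NW W * Polynomial.aeval s Q = F := by
        calc Polynomial.aeval s R + NW W * Polynomial.aeval s Q
            = Polynomial.aeval s R + Polynomial.aeval s (NW W) * Polynomial.aeval s Q := by
              rw [NW_aeval W c]
          _ = Polynomial.aeval s (R + NW W * Q) := by rw [map_add, map_mul]
          _ = F := by rw [hFeq, h c]
      have hdegR : (Polynomial.aeval s R).degree < (NW W).degree := by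
        have e1 : (Polynomial.aeval s R).natDegree = R.natDegree := by
          rw [← Polynomial.comp_eq_aeval, Polynomial.natDegree_comp, hsdeg, mul_one]
        calc (Polynomial.aeval s R).degree
            ≤ ((Polynomial.aeval s R).natDegree : WithBot ℕ) := Polynomial.degree_le_natDegree
          _ < ((NW W).natDegree : WithBot ℕ) := by
              rw [e1]
              exact_mod_cast (by omega : R.natDegree < (NW W).natDegree)
          _ = (NW W).degree := (Polynomial.degree_eq_natDegree hmo.ne_zero).symm
      obtain ⟨h1, h2⟩ := Polynomial.div_modByMonic_unique
        (Polynomial.aeval s Q) (Polynomial.aeval s R) hmo ⟨heq, hdegR⟩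
      exact ⟨h1.symm, h2.symm⟩
    have hRmem : R ∈ Algebra.adjoin (Polynomial k) {NW W} := by
      obtain ⟨a, ha⟩ := eq_C_of_invariant W R hRdeg fun c => (hinv c).2
      rw [ha, ← Polynomial.algebraMap_eq]
      exact Subalgebra.algebraMap_mem _ a
    have hQdeg : Q.natDegree < n := by
      rw [hQdef, Polynomial.natDegree_divByMonic F hmo, hNWdeg, hn]
      omega
    have hQmem : Q ∈ Algebra.adjoin (Polynomial k) {NW W} :=
      ih Q.natDegree hQdeg Q (fun c => (hinv c).1) rfl
    rw [← hFeq]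
    exact add_mem hRmem (mul_mem (Algebra.subset_adjoin rfl) hQmem)

lemma invariant_of_mem (F : Polynomial (Polynomial k))
    (hF : F ∈ Algebra.adjoin (Polynomial k) {NW W}) (c : W) :
    Polynomial.aeval (Polynomial.X + Polynomial.C (av (c : k))) F = F := by
  induction hF using Algebra.adjoin_induction with
  | mem x hx =>
    rw [Set.mem_singleton_iff] at hx
    subst hx
    exact NW_aeval W c
  | algebraMap r => exact (Polynomial.aeval _).commutes r
  | add x y hx hy hx' hy' => rw [map_add, hx', hy']
  | mul x y hx hy hx' hy' => rw [map_mul, hx', hy']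

lemma poly_iff (F : Polynomial (Polynomial k)) :
    (∀ c : W, Polynomial.aeval (Polynomial.X + Polynomial.C (av (c : k))) F = F) ↔
      F ∈ Algebra.adjoin (Polynomial k) {NW W} :=
  ⟨mem_adjoin_of_invariant W F, fun h c => invariant_of_mem W F h c⟩

/-- `k[x,y] ≃ₐ[k] (k[x])[y]`, sending `X 0 ↦ C X` and `X 1 ↦ X`. -/
noncomputable def e (k : Type*) [CommSemiring k] :
    MvPolynomial (Fin 2) k ≃ₐ[k] Polynomial (Polynomial k) :=
  (renameEquiv k (Equiv.swap 0 1)).trans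
    ((MvPolynomial.finSuccEquiv k 1).trans
      (Polynomial.mapAlgEquiv
        ((MvPolynomial.finSuccEquiv k 0).trans
          (Polynomial.mapAlgEquiv (MvPolynomial.isEmptyAlgEquiv k (Fin 0))))))

lemma e_X0 : e k (X 0) = Polynomial.C Polynomial.X := by
  have h1 : ((1 : Fin 2)) = Fin.succ 0 := rfl
  rw [e, AlgEquiv.trans_apply, AlgEquiv.trans_apply, renameEquiv_apply, rename_X,
    Equiv.swap_apply_left, h1, finSuccEquiv_X_succ, Polynomial.coe_mapAlgEquiv,
    Polynomial.map_C]
  congr 1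
  show ((MvPolynomial.finSuccEquiv k 0).trans
      (Polynomial.mapAlgEquiv (isEmptyAlgEquiv k (Fin 0)))) (X 0) = Polynomial.X
  rw [AlgEquiv.trans_apply, finSuccEquiv_X_zero, Polynomial.coe_mapAlgEquiv, Polynomial.map_X]

lemma e_X1 : e k (X 1) = Polynomial.X := by
  rw [e, AlgEquiv.trans_apply, AlgEquiv.trans_apply, renameEquiv_apply, rename_X,
    Equiv.swap_apply_right, finSuccEquiv_X_zero, Polynomial.coe_mapAlgEquiv, Polynomial.map_X]

lemma e_C (a : k) : e k (C a) = Polynomial.C (Polynomial.C a) := by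
  rw [← MvPolynomial.algebraMap_eq, AlgEquiv.commutes,
    Polynomial.algebraMap_apply, Polynomial.algebraMap_eq]

lemma e_sigma (c : k) (f : MvPolynomial (Fin 2) k) :
    e k (sigma2 c f) = Polynomial.aeval (Polynomial.X + Polynomial.C (av c)) (e k f) := by
  have key : (e k).toAlgHom.comp (sigma2 c)
      = ((Polynomial.aeval (Polynomial.X + Polynomial.C (av c))).restrictScalars k).comp
        (e k).toAlgHom := by
    apply MvPolynomial.algHom_ext
    intro i
    fin_cases i
    · show e k (sigma2 c (X 0)) = Polynomial.aeval _ (e k (X 0))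
      rw [show sigma2 c (X 0) = X 0 by simp [sigma2], e_X0,
        Polynomial.aeval_C, Polynomial.algebraMap_eq]
    · show e k (sigma2 c (X 1)) = Polynomial.aeval _ (e k (X 1))
      rw [show sigma2 c (X 1) = X 1 + C c * X 0 by simp [sigma2], e_X1, Polynomial.aeval_X]
      rw [map_add, map_mul, e_X1, e_X0, e_C]
      rw [av, ← Polynomial.C_mul]
  exact DFunLike.congr_fun key f

lemma adjoin_restrict :
    Algebra.adjoin k {(Polynomial.C Polynomial.X : Polynomial (Polynomial k)), NW W}
      = Subalgebra.restrictScalars k (Algebra.adjoin (Polynomial k) {NW W}) := by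
  apply le_antisymm
  · apply Algebra.adjoin_le
    rintro x (rfl | rfl)
    · rw [SetLike.mem_coe, Subalgebra.mem_restrictScalars, ← Polynomial.algebraMap_eq]
      exact Subalgebra.algebraMap_mem _ _
    · rw [SetLike.mem_coe, Subalgebra.mem_restrictScalars]
      exact Algebra.subset_adjoin rfl
  · intro x hx
    rw [Subalgebra.mem_restrictScalars] at hx
    induction hx using Algebra.adjoin_induction with
    | mem y hy =>
      rw [Set.mem_singleton_iff] at hy
      subst hy
      exact Algebra.subset_adjoin (Set.mem_insert_of_mem _ rfl)
    | algebraMap r =>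
      have hr : r ∈ Algebra.adjoin k {(Polynomial.X : Polynomial k)} := by
        rw [Polynomial.adjoin_X]; trivial
      have h3 : Polynomial.C r ∈
          (Algebra.adjoin k {(Polynomial.X : Polynomial k)}).map
            (Polynomial.CAlgHom (R := k) (A := Polynomial k)) := ⟨r, hr, rfl⟩
      rw [AlgHom.map_adjoin, Set.image_singleton] at h3
      rw [Polynomial.algebraMap_eq]
      refine Algebra.adjoin_mono ?_ h3
      intro z hz
      rw [Set.mem_singleton_iff] at hz
      subst hz
      exact Set.mem_insert _ _
    | add x y hx hy hx' hy' => exact add_mem hx' hy'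
    | mul x y hx hy hx' hy' => exact mul_mem hx' hy'

end InvariantsAux

open InvariantsAux in
/-- For a finite additive subgroup `W ≤ (k,+)` acting on `k[x,y]` by `x ↦ x`, `y ↦ y + cx`,
the ring of invariants `k[x,y]^W` is the subalgebra `k[x, N_W(y)]` where
`N_W(y) = ∏_{c∈W}(y + cx)`. -/
theorem invariants_dim_two {p : ℕ} [Fact p.Prime] {k : Type*} [Field k] [CharP k p]
    (W : AddSubgroup k) [Fintype W] :
    ∀ f : MvPolynomial (Fin 2) k,
      (∀ c : W, sigma2 (c : k) f = f) ↔
        f ∈ Algebra.adjoin k {(X 0 : MvPolynomial (Fin 2) k),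
          ∏ c : W, (X 1 + C (c : k) * X 0)} := by
  intro f
  have heN : e k (∏ c : W, (X 1 + C (c : k) * X 0)) = NW W := by
    rw [map_prod, NW]
    refine Finset.prod_congr rfl fun c _ => ?_
    rw [map_add, map_mul, e_X1, e_X0, e_C, av, ← Polynomial.C_mul]
  have h1 : (∀ c : W, sigma2 (c : k) f = f) ↔
      (∀ c : W, Polynomial.aeval (Polynomial.X + Polynomial.C (av (c : k))) (e k f) = e k f) := by
    refine forall_congr' fun c => ?_
    rw [← e_sigma]
    exact ⟨fun h => by rw [h], fun h => (e k).injective h⟩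
  have himg : ((e k) '' {(X 0 : MvPolynomial (Fin 2) k), ∏ c : W, (X 1 + C (c : k) * X 0)})
      = {(Polynomial.C Polynomial.X : Polynomial (Polynomial k)), NW W} := by
    rw [Set.image_insert_eq, Set.image_singleton, e_X0, heN]
  have h2 : f ∈ Algebra.adjoin k {(X 0 : MvPolynomial (Fin 2) k),
      ∏ c : W, (X 1 + C (c : k) * X 0)} ↔
      e k f ∈ Algebra.adjoin k
        {(Polynomial.C Polynomial.X : Polynomial (Polynomial k)), NW W} := by
    rw [← himg]
    have hmap := AlgHom.map_adjoin (e k).toAlgHom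
      ({(X 0 : MvPolynomial (Fin 2) k), ∏ c : W, (X 1 + C (c : k) * X 0)} : Set _)
    rw [AlgEquiv.coe_algHom] at hmap
    constructor
    · intro h
      rw [← hmap]
      exact ⟨f, h, rfl⟩
    · intro h
      rw [← hmap] at h
      obtain ⟨g, hg, hgf⟩ := h
      rwa [← (e k).injective hgf]
  rw [h1, h2, adjoin_restrict, Subalgebra.mem_restrictScalars]
  exact poly_iff W (e k f)
end

section
/- Let k be a field of characteristic p > 2, W a finite subgroup of (k,+) of order pʳ acting on k[x,y,z] by x·c = x, y·c = y+cx, z·c = z+2cy+c²x. With δ := y²−xz, N_W(y) := ∏_{c∈W}(y+cx), N_W(z) := ∏_{c∈W}(z+2cy+c²x), and H_W(s,t) ∈ k[s,t] the unique polynomial with H_W(x,y²) = N_W(y)² − y^{2pʳ}, the relation δ^{pʳ} − N_W(y)² + x^{pʳ} N_W(z) + H_W(x,δ) = 0 holds in k[x,y,z]. -/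
open MvPolynomial

namespace SymSqAux

variable {k : Type*} [Field k]

lemma eval_aeval (x a : MvPolynomial (Fin 3) k) (H : MvPolynomial (Fin 2) k) :
    Polynomial.eval a (aeval (R := k) ![Polynomial.C x, Polynomial.X] H)
      = aeval (R := k) ![x, a] H := by
  have h := comp_aeval_apply (f := ![Polynomial.C x, Polynomial.X])
    ((Polynomial.aeval a).restrictScalars k) H
  have h2 : (fun i => ((Polynomial.aeval a).restrictScalars k) (![Polynomial.C x, Polynomial.X] i))
      = ![x, a] := by
    funext i
    fin_cases i <;> simp
  rw [h2] at h
  simpa [Polynomial.coe_aeval_eq_eval] using h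

lemma natDegree_aeval_CX_le (x : MvPolynomial (Fin 3) k) (H : MvPolynomial (Fin 2) k) :
    (aeval (R := k) ![Polynomial.C x, Polynomial.X] H).natDegree ≤ H.degreeOf 1 := by
  conv_lhs => rw [← support_sum_monomial_coeff H, map_sum]
  apply Polynomial.natDegree_sum_le_of_forall_le
  intro u hu
  rw [aeval_monomial]
  refine le_trans (Polynomial.natDegree_mul_le) ?_
  have h1 : (algebraMap k (Polynomial (MvPolynomial (Fin 3) k)) (coeff u H)).natDegree = 0 := by
    rw [Polynomial.algebraMap_apply, Polynomial.natDegree_C]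
  rw [h1, zero_add]
  rw [Finsupp.prod_fintype _ _ (by intro i; simp), Fin.prod_univ_two]
  refine le_trans (Polynomial.natDegree_mul_le) ?_
  have h2 : ((![Polynomial.C x, Polynomial.X] 0 : Polynomial (MvPolynomial (Fin 3) k))
      ^ (u 0)).natDegree = 0 := by
    rw [Polynomial.natDegree_pow]
    simp [Matrix.cons_val_zero]
  have h3 : ((![Polynomial.C x, Polynomial.X] 1 : Polynomial (MvPolynomial (Fin 3) k))
      ^ (u 1)).natDegree ≤ u 1 := by
    rw [Matrix.cons_val_one, Matrix.cons_val_zero, Polynomial.natDegree_X_pow]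
  have h4 : u 1 ≤ H.degreeOf 1 := by
    rw [degreeOf_eq_sup]
    exact Finset.le_sup (f := fun m => m 1) hu
  omega

lemma prod_linear_decomp {ι : Type*} (s : Finset ι) (f : ι → k) :
    ∃ G : MvPolynomial (Fin 3) k,
      (∏ c ∈ s, (X 1 + C (f c) * X 0)) = X 1 ^ s.card + G ∧
        (degreeOf 1 G + 1 ≤ s.card ∨ G = 0) := by
  classical
  induction s using Finset.cons_induction with
  | empty => exact ⟨0, by simp, Or.inr rfl⟩
  | cons c s hc ih =>
    obtain ⟨G, hG, hd⟩ := ih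
    refine ⟨C (f c) * X 0 * X 1 ^ s.card + X 1 * G + C (f c) * X 0 * G, ?_, Or.inl ?_⟩
    · rw [Finset.prod_cons, hG, Finset.card_cons]
      ring
    · rw [Finset.card_cons]
      have hA : degreeOf 1 (C (f c) * X 0 : MvPolynomial (Fin 3) k) = 0 := by
        refine le_antisymm (le_trans (degreeOf_mul_le _ _ _) ?_) (Nat.zero_le _)
        simp [degreeOf_C, degreeOf_X]
      have hX : degreeOf 1 (X 1 : MvPolynomial (Fin 3) k) = 1 := by simp [degreeOf_X]
      have b1 : degreeOf 1 (C (f c) * X 0 * X 1 ^ s.card : MvPolynomial (Fin 3) k) ≤ s.card := by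
        refine le_trans (degreeOf_mul_le _ _ _) ?_
        have hB : degreeOf 1 ((X 1 : MvPolynomial (Fin 3) k) ^ s.card) ≤ s.card := by
          refine le_trans (degreeOf_pow_le _ _ _) ?_
          rw [hX]; omega
        omega
      have b2 : degreeOf 1 (X 1 * G : MvPolynomial (Fin 3) k) ≤ s.card := by
        rcases hd with h | h
        · refine le_trans (degreeOf_mul_le _ _ _) ?_
          omega
        · simp [h]
      have b3 : degreeOf 1 (C (f c) * X 0 * G : MvPolynomial (Fin 3) k) ≤ s.card := by
        rcases hd with h | h
        · refine le_trans (degreeOf_mul_le _ _ _) ?_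
          omega
        · simp [h]
      have := degreeOf_add_le (1 : Fin 3)
        (C (f c) * X 0 * X 1 ^ s.card + X 1 * G) (C (f c) * X 0 * G)
      have h2 := degreeOf_add_le (1 : Fin 3) (C (f c) * X 0 * X 1 ^ s.card) (X 1 * G)
      omega

lemma aeval_monomial_sq (u : Fin 2 →₀ ℕ) (c : k) :
    aeval (R := k) ![(X 0 : MvPolynomial (Fin 3) k), X 1 ^ 2] (monomial u c)
      = monomial (Finsupp.single 0 (u 0) + Finsupp.single 1 (2 * u 1)) c := by
  rw [aeval_monomial, monomial_eq]
  rw [Finsupp.prod_fintype _ _ (by intro i; simp),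
    Finsupp.prod_fintype _ _ (by intro i; simp)]
  rw [Fin.prod_univ_two, Fin.prod_univ_three]
  simp [Finsupp.single_apply, algebraMap_eq, pow_mul]

lemma degreeOf_H_lt {n : ℕ} (hn : 0 < n) (H : MvPolynomial (Fin 2) k)
    (P : MvPolynomial (Fin 3) k)
    (hHP : aeval (R := k) ![(X 0 : MvPolynomial (Fin 3) k), X 1 ^ 2] H = P)
    (hP : degreeOf 1 P < 2 * n) :
    degreeOf 1 H < n := by
  classical
  by_contra hcon
  push_neg at hcon
  have hne : H ≠ 0 := by
    rintro rfl
    simp [degreeOf_zero] at hcon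
    omega
  obtain ⟨e, he, hesup⟩ := Finset.exists_mem_eq_sup H.support
    (support_nonempty.mpr hne) (fun m => m 1)
  have he1 : n ≤ e 1 := by
    rw [degreeOf_eq_sup, hesup] at hcon
    exact hcon
  set g : (Fin 2 →₀ ℕ) → (Fin 3 →₀ ℕ) :=
    fun u => Finsupp.single 0 (u 0) + Finsupp.single 1 (2 * u 1) with hg
  have hcoeff : coeff (g e) P = coeff e H := by
    rw [← hHP]
    conv_lhs => rw [← support_sum_monomial_coeff H, map_sum]
    rw [Finset.sum_congr rfl (fun u _ => aeval_monomial_sq u (coeff u H))]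
    rw [MvPolynomial.coeff_sum]
    rw [Finset.sum_eq_single_of_mem e he]
    · rw [coeff_monomial, if_pos rfl]
    · intro u hu hune
      rw [coeff_monomial, if_neg]
      intro heq
      apply hune
      have h0 : u 0 = e 0 := by
        have := DFunLike.congr_fun heq (0 : Fin 3)
        simpa [hg, Finsupp.single_apply] using this
      have h1 : u 1 = e 1 := by
        have := DFunLike.congr_fun heq (1 : Fin 3)
        simp [hg, Finsupp.single_apply] at this
        omega
      ext i
      fin_cases i
      · exact h0
      · exact h1
  have hmem : g e ∈ P.support := by
    rw [mem_support_iff, hcoeff]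
    exact mem_support_iff.mp he
  have h5 : (g e) 1 ≤ degreeOf 1 P := by
    rw [degreeOf_eq_sup]
    exact Finset.le_sup (f := fun m => m 1) hmem
  have h6 : (g e) 1 = 2 * e 1 := by simp [hg, Finsupp.single_apply]
  omega

end SymSqAux

open SymSqAux

/-- With `δ = y² − xz`, `N_W(y) = ∏_{c∈W}(y+cx)`, `N_W(z) = ∏_{c∈W}(z+2cy+c²x)` and
`H_W(s,t)` the polynomial satisfying `H_W(x,y²) = N_W(y)² − y^{2pʳ}`, the relation
`δ^{pʳ} − N_W(y)² + x^{pʳ}·N_W(z) + H_W(x,δ) = 0` holds in `k[x,y,z]`. -/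
theorem symmetric_square_relation {p : ℕ} [Fact p.Prime] (hp2 : 2 < p)
    {k : Type*} [Field k] [CharP k p]
    (W : AddSubgroup k) [Fintype W] (r : ℕ) (hcard : Fintype.card W = p ^ r)
    (H : MvPolynomial (Fin 2) k)
    (hH : aeval (R := k) ![(X 0 : MvPolynomial (Fin 3) k), X 1 ^ 2] H =
      (∏ c : W, (X 1 + C (c : k) * X 0)) ^ 2 - X 1 ^ (2 * p ^ r)) :
    (X 1 ^ 2 - X 0 * X 2 : MvPolynomial (Fin 3) k) ^ p ^ r
      - (∏ c : W, (X 1 + C (c : k) * X 0)) ^ 2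
      + X 0 ^ p ^ r * ∏ c : W, (X 2 + 2 * C (c : k) * X 1 + C (c : k) ^ 2 * X 0)
      + aeval (R := k) ![(X 0 : MvPolynomial (Fin 3) k), X 1 ^ 2 - X 0 * X 2] H = 0 := by
  classical
  have hp : p.Prime := Fact.out
  have hpos : 0 < p ^ r := pow_pos hp.pos r
  have hodd : Odd (p ^ r) := (hp.odd_of_ne_two (by omega)).pow
  have h2k : (2 : k) ≠ 0 := by
    intro h
    have h2 : ((2 : ℕ) : k) = 0 := by exact_mod_cast h
    have := (CharP.cast_eq_zero_iff k p 2).mp h2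
    have := Nat.le_of_dvd (by norm_num) this
    omega
  set x : MvPolynomial (Fin 3) k := X 0 with hx
  set y : MvPolynomial (Fin 3) k := X 1 with hy
  set z : MvPolynomial (Fin 3) k := X 2 with hz
  set F : MvPolynomial (Fin 3) k := ∏ c : W, (y + C (c : k) * x) with hF
  set a : W → MvPolynomial (Fin 3) k := fun c => (y + C (c : k) * x) ^ 2 with ha
  -- injectivity of the root family
  have hainj : Function.Injective a := by
    intro c c' h
    have hfac : ((C (c : k) - C (c' : k)) * x * (2 * y + (C (c : k) + C (c' : k)) * x)
        : MvPolynomial (Fin 3) k) = 0 := by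
      linear_combination h
    rcases mul_eq_zero.mp hfac with h1 | h1
    · rcases mul_eq_zero.mp h1 with h2 | h2
      · have h3 : (C (c : k) : MvPolynomial (Fin 3) k) = C (c' : k) := by
          linear_combination h2
        have : (c : k) = (c' : k) := C_injective _ _ h3
        exact Subtype.ext this
      · rw [hx] at h2
        exact absurd h2 (MvPolynomial.X_ne_zero 0)
    · exfalso
      have happ := congrArg (aeval (R := k) ![(0 : k), 1, 0]) h1
      rw [hx, hy] at h1
      have : (2 : k) = 0 := by
        simpa [hx, hy] using happ
      exact h2k this
  -- translation invariance and the key evaluation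
  have key : ∀ c₀ : W, aeval (R := k) ![x, a c₀] H
      = F ^ 2 - (y + C (c₀ : k) * x) ^ (2 * p ^ r) := by
    intro c₀
    set τ : MvPolynomial (Fin 3) k →ₐ[k] MvPolynomial (Fin 3) k :=
      aeval ![X 0, X 1 + C (c₀ : k) * X 0, X 2] with hτ
    have hτx : τ x = x := by simp [hτ, hx]
    have hτy : τ y = y + C (c₀ : k) * x := by simp [hτ, hx, hy]
    have hτF : τ F = F := by
      rw [hF, map_prod]
      have hstep : ∀ c : W, τ (y + C (c : k) * x) = y + C (((c₀ + c : W) : k)) * x := by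
        intro c
        have hc : τ (C (c : k)) = C (c : k) := by simp [hτ]
        rw [map_add, map_mul, hτy, AddSubgroup.coe_add, map_add, hc, hτx]
        ring
      rw [Finset.prod_congr rfl (fun c _ => hstep c)]
      exact Fintype.prod_equiv (Equiv.addLeft c₀) _ _ (fun c => rfl)
    have h1 := comp_aeval_apply (f := ![x, y ^ 2]) τ H
    have h2 : (fun i => τ (![x, y ^ 2] i)) = ![x, a c₀] := by
      funext i
      fin_cases i
      · simpa using hτx
      · show τ (y ^ 2) = a c₀
        rw [map_pow, hτy]
    rw [h2, hH, map_sub, map_pow, map_pow, hτF, hτy] at h1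
    exact h1.symm
  -- degree bound on H
  have hdegH : degreeOf 1 H < p ^ r := by
    refine degreeOf_H_lt hpos H _ hH ?_
    obtain ⟨G, hG, hd⟩ := prod_linear_decomp (Finset.univ : Finset W) (fun c => (c : k))
    rw [Finset.card_univ, hcard] at hG hd
    have hFG : F = y ^ (p ^ r) + G := by
      rw [hF, hG]
    have hC2 : (C (2 : k) : MvPolynomial (Fin 3) k) = 2 := by
      rw [show (2 : k) = 1 + 1 from by norm_num, map_add, map_one]
      norm_num
    have hexp : F ^ 2 - y ^ (2 * p ^ r) = C (2 : k) * y ^ (p ^ r) * G + G ^ 2 := by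
      rw [hFG, hC2]
      ring
    rw [hexp]
    have hX : degreeOf 1 (y : MvPolynomial (Fin 3) k) = 1 := by simp [hy, degreeOf_X]
    rcases hd with hd | hd
    · have b1 : degreeOf 1 (C (2 : k) * y ^ (p ^ r) * G) < 2 * p ^ r := by
        refine lt_of_le_of_lt (degreeOf_mul_le _ _ _) ?_
        have i1 : degreeOf 1 (C (2 : k) * y ^ (p ^ r) : MvPolynomial (Fin 3) k) ≤ p ^ r := by
          refine le_trans (degreeOf_mul_le _ _ _) ?_
          have := degreeOf_pow_le (1 : Fin 3) (y : MvPolynomial (Fin 3) k) (p ^ r)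
          rw [hX] at this
          simp [degreeOf_C]
          omega
        omega
      have b2 : degreeOf 1 (G ^ 2) < 2 * p ^ r := by
        refine lt_of_le_of_lt (degreeOf_pow_le _ _ _) ?_
        omega
      exact lt_of_le_of_lt (degreeOf_add_le _ _ _) (max_lt b1 b2)
    · rw [hd]
      simp [degreeOf_zero]
      omega
  -- the auxiliary one-variable polynomial
  set J : Polynomial (MvPolynomial (Fin 3) k) :=
    aeval (R := k) ![Polynomial.C x, Polynomial.X] H with hJ
  set M : Polynomial (MvPolynomial (Fin 3) k) :=
    ∏ c : W, (Polynomial.X - Polynomial.C (a c)) with hM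
  have hMmonic : M.Monic :=
    Polynomial.monic_prod_of_monic _ _ (fun _ _ => Polynomial.monic_X_sub_C _)
  have hMdeg : M.natDegree = p ^ r := by
    rw [hM, Polynomial.natDegree_prod_of_monic _ _ (fun _ _ => Polynomial.monic_X_sub_C _)]
    simp [Polynomial.natDegree_X_sub_C, Finset.card_univ, hcard]
  set Rw : Polynomial (MvPolynomial (Fin 3) k) :=
    (Polynomial.X ^ (p ^ r) - M) + (J - Polynomial.C (F ^ 2)) with hRw
  have hdeg1 : (Polynomial.X ^ (p ^ r) - M).degree < ((p ^ r : ℕ) : WithBot ℕ) := by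
    have h := Polynomial.degree_sub_lt
      (p := (Polynomial.X ^ (p ^ r) : Polynomial (MvPolynomial (Fin 3) k))) (q := M)
      (by rw [Polynomial.degree_X_pow, Polynomial.degree_eq_natDegree hMmonic.ne_zero, hMdeg])
      (pow_ne_zero _ Polynomial.X_ne_zero)
      (by rw [Polynomial.leadingCoeff_X_pow, hMmonic.leadingCoeff])
    rwa [Polynomial.degree_X_pow] at h
  have hdeg2 : (J - Polynomial.C (F ^ 2)).degree < ((p ^ r : ℕ) : WithBot ℕ) := by
    refine lt_of_le_of_lt (Polynomial.degree_sub_le _ _) (max_lt ?_ ?_)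
    · refine lt_of_le_of_lt (Polynomial.degree_le_natDegree) ?_
      have := natDegree_aeval_CX_le x H
      rw [← hJ] at this
      exact_mod_cast lt_of_le_of_lt (Nat.cast_le.mpr this) (Nat.cast_lt.mpr hdegH)
    · refine lt_of_le_of_lt (Polynomial.degree_C_le) ?_
      exact_mod_cast WithBot.coe_lt_coe.mpr hpos
  have hRdeg : Rw.degree < ((p ^ r : ℕ) : WithBot ℕ) :=
    lt_of_le_of_lt (Polynomial.degree_add_le _ _) (max_lt hdeg1 hdeg2)
  -- the roots
  have hroots : ∀ c₀ : W, Rw.eval (a c₀) = 0 := by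
    intro c₀
    have hMe : M.eval (a c₀) = 0 := by
      rw [hM, Polynomial.eval_prod]
      exact Finset.prod_eq_zero (Finset.mem_univ c₀) (by simp)
    have hJe : J.eval (a c₀) = aeval (R := k) ![x, a c₀] H := eval_aeval x (a c₀) H
    rw [hRw]
    rw [Polynomial.eval_add, Polynomial.eval_sub, Polynomial.eval_sub,
      Polynomial.eval_pow, Polynomial.eval_X, Polynomial.eval_C, hMe, hJe, key c₀]
    have hpow : a c₀ ^ (p ^ r) = (y + C (c₀ : k) * x) ^ (2 * p ^ r) := by
      rw [ha, ← pow_mul]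
    rw [hpow]
    ring
  -- Rw vanishes
  have hR0 : Rw = 0 := by
    by_cases h0 : Rw = 0
    · exact h0
    · refine Polynomial.eq_zero_of_natDegree_lt_card_of_eval_eq_zero Rw hainj hroots ?_
      rw [hcard]
      exact (Polynomial.natDegree_lt_iff_degree_lt h0).mpr hRdeg
  -- evaluate at δ
  set δ : MvPolynomial (Fin 3) k := y ^ 2 - x * z with hδ
  have hev := congrArg (Polynomial.eval δ) hR0
  rw [hRw] at hev
  rw [Polynomial.eval_zero, Polynomial.eval_add, Polynomial.eval_sub, Polynomial.eval_sub,
    Polynomial.eval_pow, Polynomial.eval_X, Polynomial.eval_C] at hev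
  have hMδ : M.eval δ
      = -(x ^ p ^ r * ∏ c : W, (z + 2 * C (c : k) * y + C (c : k) ^ 2 * x)) := by
    rw [hM, Polynomial.eval_prod]
    have hstep : ∀ c : W, (Polynomial.X - Polynomial.C (a c)).eval δ
        = (-1) * (x * (z + 2 * C (c : k) * y + C (c : k) ^ 2 * x)) := by
      intro c
      rw [Polynomial.eval_sub, Polynomial.eval_X, Polynomial.eval_C, ha, hδ]
      ring
    rw [Finset.prod_congr rfl (fun c _ => hstep c), Finset.prod_mul_distrib,
      Finset.prod_mul_distrib, Finset.prod_const, Finset.prod_const,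
      Finset.card_univ, hcard, hodd.neg_one_pow]
    ring
  have hJδ : J.eval δ = aeval (R := k) ![x, δ] H := eval_aeval x δ H
  rw [hMδ, hJδ] at hev
  linear_combination hev
end

section
/- Let k be a field of characteristic p, G a finite p-group, and V a finite-dimensional representation of G over k with a chosen basis x, y₁, …, y_{n−1} of V* on which G acts by upper-triangular unipotent matrices with x fixed. Let A ⊆ k[V]^G be a graded subalgebra containing x such that A[x⁻¹] = k[V]^G[x⁻¹], the extension A ⊆ k[V]^G is integral, and A has a SAGBI basis B containing x whose other elements have lead monomials (in grevlex with x smallest) lying in k[y₁,…,y_{n−1}]. Then A = k[V]^G. -/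
open MvPolynomial

variable {n : ℕ}

/-- The graded reverse lexicographic order on monomials in `x = X 0 < y₁ = X 1 < ⋯`:
`a < b` iff `deg a < deg b`, or the degrees agree and at the smallest-index variable
where `a` and `b` differ, `a` has the larger exponent. -/
def GrevlexLt (a b : Fin (n + 1) →₀ ℕ) : Prop :=
  (a.sum fun _ e => e) < (b.sum fun _ e => e) ∨
    ((a.sum fun _ e => e) = (b.sum fun _ e => e) ∧
      ∃ i : Fin (n + 1), b i < a i ∧ ∀ j : Fin (n + 1), j < i → a j = b j)

/-- `d` is the lead monomial of `f` with respect to grevlex. -/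
def IsLeadMonomial {k : Type*} [CommSemiring k] (f : MvPolynomial (Fin (n + 1)) k) (d : Fin (n + 1) →₀ ℕ) : Prop :=
  d ∈ f.support ∧ ∀ e ∈ f.support, e ≠ d → GrevlexLt e d

/-- tail sums -/
def gvS (a : Fin (n + 1) →₀ ℕ) (j : ℕ) : ℕ :=
  ∑ i : Fin (n + 1), if j ≤ (i : ℕ) then a i else 0

lemma gvS_zero (a : Fin (n + 1) →₀ ℕ) : gvS a 0 = ∑ i, a i := by
  simp [gvS]

lemma deg_eq_sum (a : Fin (n + 1) →₀ ℕ) : (a.sum fun _ e => e) = ∑ i, a i :=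
  Finsupp.sum_fintype _ _ (fun _ => rfl)

lemma gvS_succ (a : Fin (n + 1) →₀ ℕ) (j : ℕ) (hj : j < n + 1) :
    gvS a j = a ⟨j, hj⟩ + gvS a (j + 1) := by
  have h1 : a ⟨j, hj⟩ = ∑ i : Fin (n + 1), if (⟨j, hj⟩ : Fin (n + 1)) = i then a i else 0 := by
    simp
  rw [gvS, gvS, h1, ← Finset.sum_add_distrib]
  refine Finset.sum_congr rfl fun i _ => ?_
  have hiff : ((⟨j, hj⟩ : Fin (n + 1)) = i) ↔ j = (i : ℕ) :=
    ⟨fun h => congrArg Fin.val h, fun h => Fin.ext h⟩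
  simp only [hiff]
  split_ifs <;> omega

/-- the lex embedding -/
noncomputable def gvPsi (a : Fin (n + 1) →₀ ℕ) : Lex (Fin (n + 2) → ℕ) :=
  toLex fun j : Fin (n + 2) => gvS a (j : ℕ)

lemma gvPsi_inj : Function.Injective (gvPsi (n := n)) := by
  intro a b h
  have h' : ∀ j : Fin (n + 2), gvS a (j : ℕ) = gvS b (j : ℕ) :=
    fun j => congrFun (toLex.injective h) j
  ext i
  have h1 : gvS a (i : ℕ) = gvS b (i : ℕ) := h' ⟨(i : ℕ), by omega⟩
  have h2 : gvS a ((i : ℕ) + 1) = gvS b ((i : ℕ) + 1) := h' ⟨(i : ℕ) + 1, by omega⟩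
  have h3 := gvS_succ a (i : ℕ) i.isLt
  have h4 := gvS_succ b (i : ℕ) i.isLt
  simp only [Fin.eta] at h3 h4
  omega

lemma grevlexLt_iff (a b : Fin (n + 1) →₀ ℕ) :
    GrevlexLt a b ↔ gvPsi a < gvPsi b := by
  have hlt : ∀ u v : Fin (n + 2) → ℕ,
      (toLex u < toLex v) ↔ ∃ I : Fin (n + 2), (∀ j, j < I → u j = v j) ∧ u I < v I := by
    intro u v
    exact ⟨fun ⟨I, hI, h⟩ => ⟨I, hI, h⟩, fun ⟨I, hI, h⟩ => ⟨I, hI, h⟩⟩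
  rw [gvPsi, gvPsi, hlt]
  constructor
  · rintro (hdeg | ⟨hdeg, i, hbi, hpre⟩)
    · refine ⟨0, fun j hj => absurd hj (by simp), ?_⟩
      simpa [gvS_zero, ← deg_eq_sum] using hdeg
    · -- prefix tail sums agree up to i
      have claim : ∀ j : ℕ, j ≤ (i : ℕ) → gvS a j = gvS b j := by
        intro j
        induction j with
        | zero => intro _; rw [gvS_zero, gvS_zero, ← deg_eq_sum, ← deg_eq_sum, hdeg]
        | succ j ih =>
          intro hji
          have hj1 : j < n + 1 := by omega
          have hab : a ⟨j, hj1⟩ = b ⟨j, hj1⟩ :=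
            hpre ⟨j, hj1⟩ (Fin.lt_def.mpr (show j < (i : ℕ) by omega))
          have h3 := gvS_succ a j hj1
          have h4 := gvS_succ b j hj1
          have := ih (by omega)
          omega
      refine ⟨⟨(i : ℕ) + 1, by omega⟩, ?_, ?_⟩
      · intro j hj
        rw [Fin.lt_def] at hj
        have hj' : (j : ℕ) < (i : ℕ) + 1 := hj
        exact claim (j : ℕ) (by omega)
      · have h3 := gvS_succ a (i : ℕ) i.isLt
        have h4 := gvS_succ b (i : ℕ) i.isLt
        simp only [Fin.eta] at h3 h4
        have := claim (i : ℕ) le_rfl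
        simp only []
        omega
  · rintro ⟨I, hpre, hI⟩
    rcases Nat.eq_zero_or_pos (I : ℕ) with hI0 | hIpos
    · left
      rw [deg_eq_sum, deg_eq_sum, ← gvS_zero, ← gvS_zero]
      simpa [hI0] using hI
    · have hIn : (I : ℕ) - 1 < n + 1 := by omega
      set i : Fin (n + 1) := ⟨(I : ℕ) - 1, hIn⟩ with hi
      have claim : ∀ j : ℕ, j < (I : ℕ) → gvS a j = gvS b j := by
        intro j hj
        exact hpre ⟨j, by omega⟩ (by rw [Fin.lt_def]; exact hj)
      have hdeg : (a.sum fun _ e => e) = (b.sum fun _ e => e) := by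
        rw [deg_eq_sum, deg_eq_sum, ← gvS_zero, ← gvS_zero]
        exact claim 0 hIpos
      refine Or.inr ⟨hdeg, i, ?_, ?_⟩
      · have h3 := gvS_succ a ((I : ℕ) - 1) hIn
        have h4 := gvS_succ b ((I : ℕ) - 1) hIn
        have h5 : (I : ℕ) - 1 + 1 = (I : ℕ) := by omega
        rw [h5] at h3 h4
        have h6 := claim ((I : ℕ) - 1) (by omega)
        simp only [hi]
        omega
      · intro j hj
        rw [Fin.lt_def] at hj
        simp only [hi] at hj
        have hj1 : (j : ℕ) + 1 < (I : ℕ) := by omega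
        have h3 := gvS_succ a (j : ℕ) j.isLt
        have h4 := gvS_succ b (j : ℕ) j.isLt
        simp only [Fin.eta] at h3 h4
        have h5 := claim (j : ℕ) (by omega)
        have h6 := claim ((j : ℕ) + 1) hj1
        omega

lemma grevlex_irrefl (a : Fin (n + 1) →₀ ℕ) : ¬ GrevlexLt a a := by
  rintro (h | ⟨-, i, hi, -⟩)
  · exact lt_irrefl _ h
  · exact lt_irrefl _ hi

lemma grevlex_trans {a b c : Fin (n + 1) →₀ ℕ}
    (h1 : GrevlexLt a b) (h2 : GrevlexLt b c) : GrevlexLt a c := by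
  rw [grevlexLt_iff] at *
  exact lt_trans h1 h2

lemma grevlex_wf : WellFounded (GrevlexLt (n := n)) := by
  have h : WellFounded ((· < ·) : Lex (Fin (n + 2) → ℕ) → Lex (Fin (n + 2) → ℕ) → Prop) :=
    Pi.Lex.wellFounded (· < ·) fun _ => (Nat.lt_wfRel.wf)
  exact Subrelation.wf (fun {a b} hab => (grevlexLt_iff a b).mp hab) (InvImage.wf gvPsi h)

lemma grevlex_add_right {a b : Fin (n + 1) →₀ ℕ} (c : Fin (n + 1) →₀ ℕ)
    (h : GrevlexLt a b) : GrevlexLt (a + c) (b + c) := by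
  have hsum : ∀ u : Fin (n + 1) →₀ ℕ, ((u + c).sum fun _ e => e) =
      (u.sum fun _ e => e) + (c.sum fun _ e => e) := fun u =>
    Finsupp.sum_add_index' (fun _ => rfl) (fun _ _ _ => rfl)
  rcases h with h | ⟨hdeg, i, hi, hpre⟩
  · left; rw [hsum, hsum]; omega
  · right
    refine ⟨by rw [hsum, hsum, hdeg], i, ?_, ?_⟩
    · simp only [Finsupp.add_apply]; omega
    · intro j hj; simp only [Finsupp.add_apply, hpre j hj]

noncomputable def gvLO : LinearOrder (Lex (Fin (n + 2) → ℕ)) :=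
  @Pi.Lex.linearOrder (Fin (n + 2)) (fun _ => ℕ)
    Fin.instLinearOrder ⟨(inferInstance : WellFoundedLT (Fin (n + 2))).wf⟩ (fun _ => inferInstance)

lemma lead_exists {kk : Type*} [CommSemiring kk] {f : MvPolynomial (Fin (n + 1)) kk}
    (hf : f ≠ 0) : ∃ d, IsLeadMonomial f d := by
  letI : LinearOrder (Lex (Fin (n + 2) → ℕ)) := gvLO
  obtain ⟨d, hd, hmax⟩ := Finset.exists_max_image f.support gvPsi
    (by rwa [Finset.nonempty_iff_ne_empty, Ne, MvPolynomial.support_eq_empty])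
  refine ⟨d, hd, fun e he hne => ?_⟩
  rw [grevlexLt_iff]
  exact lt_of_le_of_ne (hmax e he) (fun h => hne (gvPsi_inj h))

lemma grevlex_add_left {a b : Fin (n + 1) →₀ ℕ} (c : Fin (n + 1) →₀ ℕ)
    (h : GrevlexLt a b) : GrevlexLt (c + a) (c + b) := by
  rw [add_comm c a, add_comm c b]; exact grevlex_add_right c h

lemma grevlex_add_of {u d v e : Fin (n + 1) →₀ ℕ}
    (hu : u = d ∨ GrevlexLt u d) (hv : v = e ∨ GrevlexLt v e)
    (hne : ¬(u = d ∧ v = e)) : GrevlexLt (u + v) (d + e) := by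
  rcases hu with rfl | hu <;> rcases hv with rfl | hv
  · exact absurd ⟨rfl, rfl⟩ hne
  · exact grevlex_add_left u hv
  · exact grevlex_add_right v hu
  · exact grevlex_trans (grevlex_add_right v hu) (grevlex_add_left d hv)

set_option maxHeartbeats 1000000 in
lemma coeff_lead_mul {k : Type*} [Field k] {f g : MvPolynomial (Fin (n + 1)) k}
    {d e : Fin (n + 1) →₀ ℕ} (hf : IsLeadMonomial f d) (hg : IsLeadMonomial g e) :
    coeff (d + e) (f * g) = coeff d f * coeff e g := by
  rw [MvPolynomial.coeff_mul]
  apply Finset.sum_eq_single (d, e)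
  · rintro ⟨u, v⟩ huv hne
    simp only [Finset.HasAntidiagonal.mem_antidiagonal] at huv
    by_contra h0
    have hu : u ∈ f.support := MvPolynomial.mem_support_iff.mpr (left_ne_zero_of_mul h0)
    have hv : v ∈ g.support := MvPolynomial.mem_support_iff.mpr (right_ne_zero_of_mul h0)
    have hlt : GrevlexLt (u + v) (d + e) := by
      refine grevlex_add_of ((eq_or_ne u d).imp_right (hf.2 u hu))
        ((eq_or_ne v e).imp_right (hg.2 v hv)) ?_
      rintro ⟨rfl, rfl⟩; exact hne rfl
    rw [huv] at hlt
    exact grevlex_irrefl _ hlt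
  · intro h; simp at h

lemma lead_mul {k : Type*} [Field k] {f g : MvPolynomial (Fin (n + 1)) k}
    {d e : Fin (n + 1) →₀ ℕ} (hf : IsLeadMonomial f d) (hg : IsLeadMonomial g e) :
    IsLeadMonomial (f * g) (d + e) := by
  classical
  constructor
  · rw [MvPolynomial.mem_support_iff, coeff_lead_mul hf hg]
    exact mul_ne_zero (MvPolynomial.mem_support_iff.mp hf.1)
      (MvPolynomial.mem_support_iff.mp hg.1)
  · intro w hw hwne
    obtain ⟨u, hu, v, hv, huv⟩ := Finset.mem_add.mp (MvPolynomial.support_mul f g hw)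
    subst huv
    refine grevlex_add_of ((eq_or_ne u d).imp_right (hf.2 u hu))
      ((eq_or_ne v e).imp_right (hg.2 v hv)) ?_
    rintro ⟨rfl, rfl⟩; exact hwne rfl

lemma supp_Xpow_mul {k : Type*} [Field k] (a : ℕ) (q : MvPolynomial (Fin (n + 1)) k) :
    ∀ e ∈ (X 0 ^ a * q).support, a ≤ e 0 := by
  classical
  intro e he
  have h2 := MvPolynomial.support_mul _ _ he
  rw [X_pow_eq_monomial, support_monomial, if_neg (one_ne_zero : (1 : k) ≠ 0)] at h2
  obtain ⟨u, hu, v, _, huv⟩ := Finset.mem_add.mp h2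
  rw [Finset.mem_singleton] at hu
  subst hu
  subst huv
  simp [Finsupp.add_apply, Finsupp.single_eq_same]

/-- Theorem 2.1 (genthm): let `G` be a `p`-group acting on `k[x, y₁, …, y_{n−1}]`
(char `k = p`) by unipotent upper-triangular linear substitutions fixing `x = X 0`.
If `A ⊆ k[V]^G` is a subalgebra, generated by a set `B` of homogeneous invariants
containing `x`, such that `A[x⁻¹] = k[V]^G[x⁻¹]`, `k[V]^G` is integral over `A`,
`B` is a SAGBI basis of `A` (for grevlex with `x` smallest), and the lead monomials of
the elements of `B` other than `x` involve only `y₁, …, y_{n−1}`, then `A = k[V]^G`. -/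
theorem genthm {p : ℕ} [Fact p.Prime] {k : Type*} [Field k] [CharP k p]
    {G : Type*} [Group G] [Finite G] (hpG : ∃ m : ℕ, Nat.card G = p ^ m)
    (ρ : G →* (MvPolynomial (Fin (n + 1)) k ≃ₐ[k] MvPolynomial (Fin (n + 1)) k))
    (hx : ∀ g : G, ρ g (X 0) = X 0)
    (htri : ∀ (g : G) (i : Fin (n + 1)),
      ρ g (X i) ∈ Submodule.span k ((fun j : Fin (n + 1) => (X j : MvPolynomial (Fin (n + 1)) k)) ''
        {j | j = 0 ∨ j ≤ i}))
    (A : Subalgebra k (MvPolynomial (Fin (n + 1)) k)) (B : Set (MvPolynomial (Fin (n + 1)) k))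
    (hgen : Algebra.adjoin k B = A)
    (hxB : (X 0 : MvPolynomial (Fin (n + 1)) k) ∈ B)
    (hBhom : ∀ f ∈ B, ∃ d : ℕ, f.IsHomogeneous d)
    -- `A ⊆ k[V]^G`:
    (hAinv : ∀ f ∈ A, ∀ g : G, ρ g f = f)
    -- `A[x⁻¹] = k[V]^G[x⁻¹]`:
    (hloc : ∀ f : MvPolynomial (Fin (n + 1)) k, (∀ g : G, ρ g f = f) → ∃ m : ℕ, X 0 ^ m * f ∈ A)
    -- `k[V]^G` is integral over `A`:
    (hint : ∀ f : MvPolynomial (Fin (n + 1)) k, (∀ g : G, ρ g f = f) → IsIntegral A f)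
    -- the lead monomials of elements of `B` other than `x` lie in `k[y₁,…,y_{n−1}]`:
    (hBlead : ∀ f ∈ B, f ≠ X 0 → ∀ d, IsLeadMonomial f d → d 0 = 0)
    -- `B` is a SAGBI basis of `A`: the lead monomials of `B` generate the lead term
    -- algebra of `A`:
    (hSAGBI : ∀ f ∈ A, ∀ d, IsLeadMonomial f d →
      (monomial d (1 : k)) ∈ Algebra.adjoin k
        {m : MvPolynomial (Fin (n + 1)) k |
          ∃ b ∈ B, ∃ e, IsLeadMonomial b e ∧ m = monomial e (1 : k)}) :
    ∀ f : MvPolynomial (Fin (n + 1)) k, (∀ g : G, ρ g f = f) ↔ f ∈ A := by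
  have hBA : B ⊆ (A : Set (MvPolynomial (Fin (n + 1)) k)) := by
    rw [← hgen]; exact Algebra.subset_adjoin
  have hXA : (X 0 : MvPolynomial (Fin (n + 1)) k) ∈ A := hBA hxB
  intro f
  refine ⟨fun hf => ?_, fun hf g => hAinv f hf g⟩
  obtain ⟨m, hm⟩ := hloc f hf
  have key : ∀ D : Fin (n + 1) →₀ ℕ, ∀ h : MvPolynomial (Fin (n + 1)) k, h ∈ A →
      (∀ e ∈ h.support, m ≤ e 0) → (∀ e ∈ h.support, e = D ∨ GrevlexLt e D) →
      ∃ g ∈ A, h = X 0 ^ m * g := by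
    intro D
    refine grevlex_wf.induction (C := fun D => ∀ h : MvPolynomial (Fin (n + 1)) k, h ∈ A →
      (∀ e ∈ h.support, m ≤ e 0) → (∀ e ∈ h.support, e = D ∨ GrevlexLt e D) →
      ∃ g ∈ A, h = X 0 ^ m * g) D ?_
    clear D
    intro D IH h hhA hdiv hlt
    rcases eq_or_ne h 0 with rfl | hh0
    · exact ⟨0, zero_mem A, by rw [mul_zero]⟩
    by_cases hD : D ∈ h.support
    swap
    · obtain ⟨D', hld'⟩ := lead_exists hh0
      have hD'D : GrevlexLt D' D := (hlt D' hld'.1).resolve_left (by rintro rfl; exact hD hld'.1)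
      exact IH D' hD'D h hhA hdiv (fun e he => (eq_or_ne e D').imp_right (hld'.2 e he))
    · have hm0 : m ≤ D 0 := hdiv D hD
      have hlead : IsLeadMonomial h D := ⟨hD, fun e he hne => (hlt e he).resolve_left hne⟩
      have hGood : ∃ Q Q' : MvPolynomial (Fin (n + 1)) k, Q ∈ A ∧ Q' ∈ A ∧
          IsLeadMonomial Q D ∧ Q = X 0 ^ (D 0) * Q' := by
        have hP : ∀ q ∈ Submonoid.closure {mm : MvPolynomial (Fin (n + 1)) k |
              ∃ b ∈ B, ∃ e, IsLeadMonomial b e ∧ mm = monomial e (1 : k)},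
            ∃ E : Fin (n + 1) →₀ ℕ,
              (∃ Q Q' : MvPolynomial (Fin (n + 1)) k, Q ∈ A ∧ Q' ∈ A ∧
                IsLeadMonomial Q E ∧ Q = X 0 ^ (E 0) * Q') ∧ q = monomial E (1 : k) := by
          intro q hq
          induction hq using Submonoid.closure_induction with
          | mem q hqS =>
            obtain ⟨b, hb, e, hbe, rfl⟩ := hqS
            by_cases hbX : b = X 0
            · subst hbX
              have he : e = Finsupp.single 0 1 := by
                have h1 := hbe.1
                rw [support_X] at h1
                exact Finset.mem_singleton.mp h1
              refine ⟨e, ⟨X 0, 1, hXA, one_mem A, hbe, ?_⟩, rfl⟩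
              rw [he, Finsupp.single_eq_same, pow_one, mul_one]
            · have he0 : e 0 = 0 := hBlead b hb hbX e hbe
              exact ⟨e, ⟨b, b, hBA hb, hBA hb, hbe, by rw [he0, pow_zero, one_mul]⟩, rfl⟩
          | one =>
            have hmon : (monomial (0 : Fin (n + 1) →₀ ℕ) (1 : k)) = 1 := by
              rw [monomial_zero', C_1]
            refine ⟨0, ⟨1, 1, one_mem A, one_mem A, ?_, by rw [Finsupp.coe_zero, Pi.zero_apply, pow_zero, one_mul]⟩, hmon.symm⟩
            constructor
            · rw [MvPolynomial.mem_support_iff, ← hmon, coeff_monomial, if_pos rfl]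
              exact one_ne_zero
            · intro e he hne
              exfalso
              have h1 := MvPolynomial.mem_support_iff.mp he
              rw [← hmon, coeff_monomial, if_neg (fun hh => hne hh.symm)] at h1
              exact h1 rfl
          | mul q₁ q₂ hq₁ hq₂ ih₁ ih₂ =>
            obtain ⟨E₁, ⟨Q₁, Q₁', hQ₁A, hQ₁'A, hl₁, hf₁⟩, rfl⟩ := ih₁
            obtain ⟨E₂, ⟨Q₂, Q₂', hQ₂A, hQ₂'A, hl₂, hf₂⟩, rfl⟩ := ih₂
            refine ⟨E₁ + E₂, ⟨Q₁ * Q₂, Q₁' * Q₂', mul_mem hQ₁A hQ₂A, mul_mem hQ₁'A hQ₂'A,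
              lead_mul hl₁ hl₂, ?_⟩, ?_⟩
            · rw [hf₁, hf₂, Finsupp.add_apply, pow_add]; ring
            · rw [monomial_mul, one_mul]
        have hspan : (monomial D (1 : k)) ∈ Submodule.span k
            ((Submonoid.closure {mm : MvPolynomial (Fin (n + 1)) k |
              ∃ b ∈ B, ∃ e, IsLeadMonomial b e ∧ mm = monomial e (1 : k)} :
                Submonoid (MvPolynomial (Fin (n + 1)) k)) : Set (MvPolynomial (Fin (n + 1)) k)) := by
          rw [← Algebra.adjoin_eq_span]
          exact hSAGBI h hhA D hlead
        have hcoe : coeff D (monomial D (1 : k)) ≠ 0 := by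
          rw [coeff_monomial, if_pos rfl]; exact one_ne_zero
        refine Submodule.span_induction (p := fun v _ => coeff D v ≠ 0 →
            ∃ Q Q' : MvPolynomial (Fin (n + 1)) k, Q ∈ A ∧ Q' ∈ A ∧
              IsLeadMonomial Q D ∧ Q = X 0 ^ (D 0) * Q') ?_ ?_ ?_ ?_ hspan hcoe
        · intro v hv hc
          obtain ⟨E, hE, rfl⟩ := hP v hv
          rw [coeff_monomial] at hc
          by_cases hED : E = D
          · subst hED; exact hE
          · rw [if_neg hED] at hc; exact absurd rfl hc
        · intro hc; simp at hc
        · intro x y hxs hys ihx ihy hc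
          rw [coeff_add] at hc
          by_cases h1 : coeff D x = 0
          · exact ihy (by intro h2; rw [h1, h2, add_zero] at hc; exact hc rfl)
          · exact ihx h1
        · intro a x hxs ihx hc
          rw [coeff_smul] at hc
          exact ihx fun h1 => hc (by rw [h1, smul_zero])
      obtain ⟨Q, Q', hQA, hQ'A, hQlead, hQfact⟩ := hGood
      have hc0 : coeff D h ≠ 0 := MvPolynomial.mem_support_iff.mp hD
      have hlc : coeff D Q ≠ 0 := MvPolynomial.mem_support_iff.mp hQlead.1
      set c : k := coeff D h * (coeff D Q)⁻¹ with hc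
      have hCc : C c ∈ A := by
        rw [← MvPolynomial.algebraMap_eq]; exact A.algebraMap_mem c
      set h' : MvPolynomial (Fin (n + 1)) k := h - C c * Q with hh'
      have hh'A : h' ∈ A := sub_mem hhA (mul_mem hCc hQA)
      have hcD' : coeff D h' = 0 := by
        rw [hh', coeff_sub, coeff_C_mul, hc, mul_assoc, inv_mul_cancel₀ hlc, mul_one, sub_self]
      have hQ0 : ∀ e ∈ Q.support, D 0 ≤ e 0 := fun e he =>
        supp_Xpow_mul (D 0) Q' e (hQfact ▸ he)
      have hsub : ∀ e ∈ h'.support, e ∈ h.support ∨ e ∈ Q.support := by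
        intro e he
        by_contra hcon
        push_neg at hcon
        have h1 : coeff e h = 0 := MvPolynomial.notMem_support_iff.mp hcon.1
        have h2 : coeff e Q = 0 := MvPolynomial.notMem_support_iff.mp hcon.2
        have h3 := MvPolynomial.mem_support_iff.mp he
        rw [hh', coeff_sub, coeff_C_mul, h1, h2, mul_zero, sub_zero] at h3
        exact h3 rfl
      have hdiv' : ∀ e ∈ h'.support, m ≤ e 0 := fun e he =>
        (hsub e he).elim (hdiv e) (fun h2 => le_trans hm0 (hQ0 e h2))
      have hlt' : ∀ e ∈ h'.support, GrevlexLt e D := by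
        intro e he
        have hne : e ≠ D := fun hEq =>
          MvPolynomial.mem_support_iff.mp he (by rw [hEq]; exact hcD')
        exact (hsub e he).elim (fun h1 => (hlt e h1).resolve_left hne)
          (fun h2 => hQlead.2 e h2 hne)
      have hrec : ∃ g' ∈ A, h' = X 0 ^ m * g' := by
        rcases eq_or_ne h' 0 with h0 | h0
        · exact ⟨0, zero_mem A, by rw [h0, mul_zero]⟩
        · obtain ⟨D', hld'⟩ := lead_exists h0
          exact IH D' (hlt' D' hld'.1) h' hh'A hdiv'
            (fun e he => (eq_or_ne e D').imp_right (hld'.2 e he))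
      obtain ⟨g', hg'A, hg'⟩ := hrec
      refine ⟨g' + C c * (X 0 ^ (D 0 - m) * Q'),
        add_mem hg'A (mul_mem hCc (mul_mem (pow_mem hXA _) hQ'A)), ?_⟩
      have hsplit : (X 0 : MvPolynomial (Fin (n + 1)) k) ^ (D 0) = X 0 ^ m * X 0 ^ (D 0 - m) := by
        rw [← pow_add, Nat.add_sub_cancel' hm0]
      have h1 : h = h' + C c * Q := by rw [hh']; ring
      rw [h1, hg', hQfact, hsplit]; ring
  rcases eq_or_ne (X 0 ^ m * f) 0 with h0 | h0
  · have hf0 : f = 0 := by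
      rcases mul_eq_zero.mp h0 with h | h
      · exact absurd h (pow_ne_zero m (MvPolynomial.X_ne_zero 0))
      · exact h
    rw [hf0]; exact zero_mem A
  · obtain ⟨D, hld⟩ := lead_exists h0
    obtain ⟨g, hgA, hg⟩ := key D _ hm (supp_Xpow_mul m f)
      (fun e he => (eq_or_ne e D).imp_right (hld.2 e he))
    have hfg : f = g := mul_left_cancel₀ (pow_ne_zero m (MvPolynomial.X_ne_zero 0)) hg
    rw [hfg]; exact hgA
end

section
/- Let k be a field of characteristic p and G a finite p-group acting faithfully and linearly on a finite-dimensional k-vector space V. Then the ring of invariants k[V]^G is a unique factorization domain. -/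
open MvPolynomial

/-- The subalgebra of elements fixed by a group acting through algebra automorphisms. -/
def fixedSubalgebra {k R G : Type*} [CommSemiring k] [CommSemiring R] [Algebra k R]
    [Group G] (ρ : G →* (R ≃ₐ[k] R)) : Subalgebra k R where
  carrier := {f | ∀ g : G, ρ g f = f}
  mul_mem' := by intro a b ha hb g; rw [map_mul, ha g, hb g]
  add_mem' := by intro a b ha hb g; rw [map_add, ha g, hb g]
  algebraMap_mem' := by intro c g; exact (ρ g).commutes c

section Aux

open UniqueFactorizationMonoid

variable {k : Type*} [Field k] {n : ℕ}

/-- Units of a multivariate polynomial ring over a field are constants. -/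
theorem aux_isUnit_eq_C {n : ℕ} (u : MvPolynomial (Fin n) k) (h : IsUnit u) :
    ∃ c : k, u = C c := by
  induction n with
  | zero => exact ⟨u.coeff 0, eq_C_of_isEmpty u⟩
  | succ m ih =>
    obtain ⟨r, hr, hC⟩ := Polynomial.isUnit_iff.mp (h.map (finSuccEquiv k m))
    obtain ⟨c, rfl⟩ := ih r hr
    refine ⟨c, ?_⟩
    have h2 := congrArg (finSuccEquiv k m).symm hC
    rw [AlgEquiv.symm_apply_apply] at h2
    rw [← h2]
    exact RingHom.congr_fun (MvPolynomial.finSuccEquiv_comp_C_eq_C (R := k) m) c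

variable {p : ℕ} [Fact p.Prime] [CharP k p]
  {G : Type*} [Group G] [Finite G]
  (ρ : G →* (MvPolynomial (Fin n) k ≃ₐ[k] MvPolynomial (Fin n) k))

/-- A nonzero semi-invariant of a `p`-group in characteristic `p` is invariant. -/
theorem aux_semiinv_fixed (hpG : ∃ m : ℕ, Nat.card G = p ^ m)
    (F : MvPolynomial (Fin n) k) (hF : F ≠ 0)
    (h : ∀ g : G, ∃ c : k, ρ g F = C c * F) : F ∈ fixedSubalgebra ρ := by
  intro g
  obtain ⟨c, hc⟩ := h g
  have key : ∀ N : ℕ, ρ (g ^ N) F = C (c ^ N) * F := by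
    intro N
    induction N with
    | zero => simp
    | succ N ihN =>
      have : ρ (g ^ (N + 1)) F = ρ (g ^ N) (ρ g F) := by
        rw [pow_succ, map_mul]; rfl
      rw [this, hc, map_mul, ihN, ← mul_assoc]
      have hcc : ρ (g ^ N) (C c) = C c := (ρ (g ^ N)).commutes c
      rw [hcc, ← C_mul, pow_succ, mul_comm (c ^ N) c]
  obtain ⟨m, hm⟩ := hpG
  have hg1 : g ^ (p ^ m) = 1 := by
    rw [← hm]; exact pow_card_eq_one'
  have hkey := key (p ^ m)
  rw [hg1, map_one] at hkey
  have hF1 : (1 : MvPolynomial (Fin n) k ≃ₐ[k] MvPolynomial (Fin n) k) F = F := rfl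
  rw [hF1] at hkey
  have hc1 : c ^ (p ^ m) = 1 := by
    have h1 : C (c ^ p ^ m) * F = 1 * F := by rw [one_mul, ← hkey]
    have h2 := mul_right_cancel₀ hF h1
    rwa [← C_1, C_inj] at h2
  have hppos : p ^ m ≠ 0 := pow_ne_zero m (Nat.Prime.ne_zero Fact.out)
  have hsub : (c - 1) ^ (p ^ m) = 0 := by
    rw [sub_pow_char_pow, hc1, one_pow, sub_self]
  have hc' : c = 1 := by
    have := pow_eq_zero_iff hppos |>.mp hsub
    linear_combination this
  rw [hc, hc', map_one, one_mul]

/-- Divisibility by an invariant element descends to the invariant ring. -/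
theorem aux_dvd_lift (F x : fixedSubalgebra ρ) (hF : (F : MvPolynomial (Fin n) k) ≠ 0)
    (h : (F : MvPolynomial (Fin n) k) ∣ (x : MvPolynomial (Fin n) k)) : F ∣ x := by
  obtain ⟨c, hc⟩ := h
  have hcinv : c ∈ fixedSubalgebra ρ := by
    intro g
    apply mul_left_cancel₀ hF
    have : ρ g ((F : MvPolynomial (Fin n) k) * c) = (x : MvPolynomial (Fin n) k) := by
      rw [← hc]; exact x.2 g
    rw [map_mul, F.2 g] at this
    rw [this, ← hc]
  exact ⟨⟨c, hcinv⟩, Subtype.ext hc⟩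

theorem aux_unit_lift (a : fixedSubalgebra ρ) (ha : (a : MvPolynomial (Fin n) k) ≠ 0)
    (h : IsUnit (a : MvPolynomial (Fin n) k)) : IsUnit a := by
  obtain ⟨v, hv⟩ := isUnit_iff_exists_inv.mp h
  have hvinv : v ∈ fixedSubalgebra ρ := by
    intro g
    apply mul_left_cancel₀ ha
    have : ρ g ((a : MvPolynomial (Fin n) k) * v) = 1 := by rw [hv]; exact map_one _
    rw [map_mul, a.2 g] at this
    rw [this, hv]
  exact isUnit_iff_exists_inv.mpr ⟨⟨v, hvinv⟩, Subtype.ext hv⟩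

end Aux

/-- The ring of invariants of a faithful linear action of a finite `p`-group on a polynomial
ring over a field of characteristic `p` is a unique factorization domain. -/
theorem invariants_p_group_UFD {p : ℕ} [Fact p.Prime] {k : Type*} [Field k] [CharP k p]
    {G : Type*} [Group G] [Finite G] (hpG : ∃ m : ℕ, Nat.card G = p ^ m)
    (n : ℕ) (ρ : G →* (MvPolynomial (Fin n) k ≃ₐ[k] MvPolynomial (Fin n) k))
    (hlin : ∀ (g : G) (i : Fin n),
      ρ g (X i) ∈ Submodule.span k (Set.range (X : Fin n → MvPolynomial (Fin n) k)))
    (hfaithful : Function.Injective ρ) :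
    UniqueFactorizationMonoid (fixedSubalgebra ρ) := by
  classical
  letI : Fintype G := Fintype.ofFinite G
  letI : NormalizationMonoid (MvPolynomial (Fin n) k) :=
    UniqueFactorizationMonoid.normalizationMonoid.toNormalizationMonoid
  set R := MvPolynomial (Fin n) k
  set A := fixedSubalgebra ρ with hA
  open UniqueFactorizationMonoid in
  -- Key construction: an invariant prime divisor of any noninvertible invariant element.
  have key : ∀ a : A, (a : R) ≠ 0 → ¬IsUnit (a : R) →
      ∃ F b : A, Prime F ∧ a = F * b ∧ (b : R) ≠ 0 ∧ ¬IsUnit (F : R) ∧ (F : R) ≠ 0 := by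
    intro a ha hnu
    obtain ⟨q, hqmem⟩ := exists_mem_normalizedFactors ha hnu
    have hq : Prime q := prime_of_normalized_factor q hqmem
    have hqa : q ∣ (a : R) := dvd_of_mem_normalizedFactors hqmem
    have hmap : ∀ (σ : MvPolynomial (Fin n) k ≃ₐ[k] MvPolynomial (Fin n) k) {x y : R},
        Associated x y → Associated (σ x) (σ y) := by
      rintro σ x y ⟨u, hu⟩
      refine ⟨Units.map (σ.toRingEquiv.toMulEquiv.toMonoidHom) u, ?_⟩
      rw [Units.coe_map]
      show σ x * σ (u : R) = σ y
      rw [← map_mul, hu]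
    have hmap_inv : ∀ (g : G) {x y : R}, Associated (ρ g x) (ρ g y) → Associated x y := by
      intro g x y h
      have h2 := hmap (ρ g).symm h
      simpa using h2
    have hnormeq : ∀ {x y : R}, Associated x y → normalize x = normalize y :=
      fun h => normalize_eq_normalize h.dvd h.symm.dvd
    set T : Finset R := Finset.univ.image (fun g : G => normalize (ρ g q)) with hT
    have hTprime : ∀ r ∈ T, Prime r := by
      intro r hr
      obtain ⟨g, _, rfl⟩ := Finset.mem_image.mp hr
      have : Prime (ρ g q) := (MulEquiv.prime_iff (p := q) (ρ g).toRingEquiv.toMulEquiv).mpr hq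
      exact (normalize_associated (ρ g q)).symm.prime this
    have hTnorm : ∀ r ∈ T, normalize r = r := by
      intro r hr
      obtain ⟨g, _, rfl⟩ := Finset.mem_image.mp hr
      exact normalize_idem _
    have hTne : ∀ r ∈ T, r ≠ 0 := fun r hr => (hTprime r hr).ne_zero
    set F0 : R := ∏ r ∈ T, r with hF0
    have hmkinj : ∀ r1 ∈ T, ∀ r2 ∈ T, Associates.mk r1 = Associates.mk r2 → r1 = r2 := by
      intro r1 h1 r2 h2 h12
      rw [← hTnorm r1 h1, ← hTnorm r2 h2]
      exact hnormeq (Associates.mk_eq_mk_iff_associated.mp h12)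
    have hmkF0 : Associates.mk F0 = ∏ s ∈ T.image Associates.mk, s := by
      rw [Finset.prod_image hmkinj, Associates.finset_prod_mk, hF0]
    -- divisibility tool
    have hTdvd : ∀ x : R, (∀ g : G, ρ g x = x) → q ∣ x → F0 ∣ x := by
      intro x hx hqx
      rw [← Associates.mk_dvd_mk, hmkF0]
      apply Finset.prod_primes_dvd
      · intro s hs
        obtain ⟨r, hr, rfl⟩ := Finset.mem_image.mp hs
        exact Associates.prime_mk.mpr (hTprime r hr)
      · intro s hs
        obtain ⟨r, hr, rfl⟩ := Finset.mem_image.mp hs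
        obtain ⟨g, _, rfl⟩ := Finset.mem_image.mp hr
        rw [Associates.mk_dvd_mk]
        have h1 : ρ g q ∣ ρ g x := map_dvd _ hqx
        rw [hx g] at h1
        exact ((normalize_associated (ρ g q)).dvd).trans h1
    have hF0ne : F0 ≠ 0 := Finset.prod_ne_zero_iff.mpr hTne
    -- invariance of F0
    have hF0inv : F0 ∈ fixedSubalgebra ρ := by
      apply aux_semiinv_fixed ρ hpG F0 hF0ne
      intro g
      have hinj : ∀ r1 ∈ T, ∀ r2 ∈ T,
          normalize (ρ g r1) = normalize (ρ g r2) → r1 = r2 := by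
        intro r1 h1 r2 h2 h12
        rw [← hTnorm r1 h1, ← hTnorm r2 h2]
        have e1 : Associated (ρ g r1) (normalize (ρ g r1)) := (normalize_associated _).symm
        rw [h12] at e1
        exact hnormeq (hmap_inv g (e1.trans (normalize_associated _)))
      have hperm : T.image (fun r => normalize (ρ g r)) = T := by
        apply Finset.eq_of_subset_of_card_le
        · intro s hs
          obtain ⟨r, hr, rfl⟩ := Finset.mem_image.mp hs
          obtain ⟨h, _, rfl⟩ := Finset.mem_image.mp hr
          have hassoc : Associated (ρ g (normalize (ρ h q))) (ρ (g * h) q) := by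
            have h2 := hmap (ρ g) (normalize_associated (ρ h q))
            have h3 : ρ g (ρ h q) = ρ (g * h) q := by rw [map_mul]; rfl
            rwa [h3] at h2
          rw [hT]
          apply Finset.mem_image.mpr
          exact ⟨g * h, Finset.mem_univ _, (hnormeq hassoc).symm⟩
        · exact le_of_eq (Finset.card_image_of_injOn
            (fun r1 h1 r2 h2 h12 => hinj r1 h1 r2 h2 h12)).symm
      have hassocF : Associated (ρ g F0) F0 := by
        rw [← Associates.mk_eq_mk_iff_associated]
        have h1 : Associates.mk (ρ g F0) = ∏ r ∈ T, Associates.mk (normalize (ρ g r)) := by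
          rw [hF0, map_prod, ← Associates.finset_prod_mk]
          exact Finset.prod_congr rfl fun r _ =>
            Associates.mk_eq_mk_iff_associated.mpr (normalize_associated (ρ g r)).symm
        have h2 : ∏ r ∈ T, Associates.mk (normalize (ρ g r)) = ∏ r ∈ T, Associates.mk r := by
          calc ∏ r ∈ T, Associates.mk (normalize (ρ g r))
              = ∏ s ∈ T.image (fun r => normalize (ρ g r)), Associates.mk s :=
                (Finset.prod_image hinj).symm
            _ = ∏ r ∈ T, Associates.mk r := by rw [hperm]
        rw [h1, h2, Associates.finset_prod_mk, hF0]
      obtain ⟨u, hu⟩ := hassocF.symm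
      obtain ⟨c, hc⟩ := aux_isUnit_eq_C (u : R) u.isUnit
      exact ⟨c, by rw [← hu, hc, mul_comm]⟩
    -- q divides F0, so F0 is not a unit
    have hqF0 : q ∣ F0 := by
      have hmem : normalize q ∈ T := by
        apply Finset.mem_image.mpr
        exact ⟨1, Finset.mem_univ _, by rw [map_one]; rfl⟩
      exact (normalize_associated q).symm.dvd.trans (Finset.dvd_prod_of_mem id hmem)
    have hF0nu : ¬IsUnit F0 := fun h => hq.not_unit (isUnit_of_dvd_unit hqF0 h)
    -- F0 divides a
    have hF0a : F0 ∣ (a : R) := hTdvd (a : R) a.2 hqa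
    obtain ⟨b0, hb0⟩ := hF0a
    have hb0inv : b0 ∈ fixedSubalgebra ρ := by
      intro g
      apply mul_left_cancel₀ hF0ne
      have : ρ g (F0 * b0) = (a : R) := by rw [← hb0]; exact a.2 g
      rw [map_mul, hF0inv g] at this
      rw [this, ← hb0]
    set F : A := ⟨F0, hF0inv⟩ with hF
    set b : A := ⟨b0, hb0inv⟩ with hb
    have hb0ne : b0 ≠ 0 := by
      intro h
      rw [h, mul_zero] at hb0
      exact ha hb0
    refine ⟨F, b, ?_, Subtype.ext hb0, hb0ne, hF0nu, hF0ne⟩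
    refine ⟨?_, ?_, ?_⟩
    · intro h
      apply hF0ne
      have := congrArg (Subtype.val) h
      exact this
    · intro h
      exact hF0nu (h.map A.val)
    · intro x y hxy
      have hdvd : F0 ∣ (x : R) * (y : R) := by
        obtain ⟨c, hc⟩ := hxy
        exact ⟨(c : R), congrArg Subtype.val hc⟩
      have hqxy : q ∣ (x : R) * (y : R) := hqF0.trans hdvd
      rcases hq.2.2 _ _ hqxy with hqx | hqy
      · left
        exact aux_dvd_lift ρ F x hF0ne (hTdvd (x : R) x.2 hqx)
      · right
        exact aux_dvd_lift ρ F y hF0ne (hTdvd (y : R) y.2 hqy)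
  -- Main argument: induction on the number of prime factors
  apply UniqueFactorizationMonoid.of_exists_prime_factors
  suffices H : ∀ (N : ℕ) (a : A), (a : R) ≠ 0 →
      Multiset.card (UniqueFactorizationMonoid.normalizedFactors (a : R)) < N →
      ∃ f : Multiset A, (∀ b ∈ f, Prime b) ∧ Associated f.prod a by
    intro a ha
    have ha' : (a : R) ≠ 0 := fun h => ha (Subtype.ext h)
    exact H (Multiset.card (UniqueFactorizationMonoid.normalizedFactors (a : R)) + 1) a ha'
      (Nat.lt_succ_self _)
  intro N
  induction N with
  | zero => intro a _ hcard; exact absurd hcard (Nat.not_lt_zero _)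
  | succ N ih =>
    intro a ha hcard
    rcases Classical.em (IsUnit a) with hu | hu
    · exact ⟨0, by simp, by
        rw [Multiset.prod_zero]
        exact (associated_one_iff_isUnit.mpr hu).symm⟩
    · have hnu : ¬IsUnit (a : R) := fun h => hu (aux_unit_lift ρ a ha h)
      obtain ⟨F, b, hFprime, hab, hbne, hFnu, hFne⟩ := key a ha hnu
      have hcoe : (a : R) = (F : R) * (b : R) := congrArg Subtype.val hab
      have hcards : Multiset.card (UniqueFactorizationMonoid.normalizedFactors ((b : R))) < N := by
        have hmul := UniqueFactorizationMonoid.normalizedFactors_mul hFne hbne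
        have hFpos : 0 < Multiset.card (UniqueFactorizationMonoid.normalizedFactors (F : R)) := by
          rw [Multiset.card_pos]
          intro h0
          apply hFnu
          have := UniqueFactorizationMonoid.prod_normalizedFactors hFne
          rw [h0, Multiset.prod_zero] at this
          exact associated_one_iff_isUnit.mp this.symm
        rw [hcoe, hmul, Multiset.card_add] at hcard
        omega
      obtain ⟨f, hf, hfp⟩ := ih b hbne hcards
      refine ⟨F ::ₘ f, ?_, ?_⟩
      · intro c hc
        rcases Multiset.mem_cons.mp hc with h | h
        · rw [h]; exact hFprime
        · exact hf c h
      · rw [Multiset.prod_cons, hab]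
        exact (hfp.mul_left F)
end
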